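/- arXiv:2512.12796 — 2 statements merged into one kernel-verified Lean document; each statement's English description precedes it below -/
import Mathlib

section
/- For the family of densities f_κ(x) = (1 − κ⁴) / (π ((1 − κ²)² + 4κ²x²) √(1 − x²)) on (−1,1) with parameter κ ∈ [0,1): f_κ defines a probability measure μ_κ, μ_κ has mean zero, and the variance of μ_κ equals (1 − κ²)/2. -/
open Real MeasureTheory Set
open scoped ENNReal NNReal

lemma hasDerivAt_F (κ : ℝ) (hκ0 : 0 ≤ κ) (hκ1 : κ < 1) {x : ℝ} (hx : x ∈ Ioo (-1:ℝ) 1) :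
    HasDerivAt (fun y => (1/π) * Real.arcsin ((1+κ^2)*y / Real.sqrt ((1-κ^2)^2 + 4*κ^2*y^2)))
      ((1 - κ ^ 4) / (π * ((1 - κ ^ 2) ^ 2 + 4 * κ ^ 2 * x ^ 2) * Real.sqrt (1 - x ^ 2))) x := by
  obtain ⟨hx1, hx2⟩ := hx
  have hk2 : (0:ℝ) < 1 - κ^2 := by nlinarith
  have hqpos : (0:ℝ) < (1-κ^2)^2 + 4*κ^2*x^2 := by positivity
  have hx2pos : (0:ℝ) < 1 - x^2 := by nlinarith
  set q : ℝ := (1-κ^2)^2 + 4*κ^2*x^2 with hqdef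
  set t : ℝ := Real.sqrt q with htdef
  set s : ℝ := Real.sqrt (1 - x^2) with hsdef
  have ht : 0 < t := Real.sqrt_pos.mpr hqpos
  have hs : 0 < s := Real.sqrt_pos.mpr hx2pos
  have ht2 : t^2 = q := Real.sq_sqrt hqpos.le
  have hs2 : s^2 = 1 - x^2 := Real.sq_sqrt hx2pos.le
  -- derivative of inner q
  have hq : HasDerivAt (fun y : ℝ => (1-κ^2)^2 + 4*κ^2*y^2) (8*κ^2*x) x := by
    have := ((hasDerivAt_pow 2 x).const_mul (4*κ^2)).const_add ((1-κ^2)^2)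
    refine this.congr_deriv (Eq.symm ?_)
    ring
  have hsq : HasDerivAt (fun y : ℝ => Real.sqrt ((1-κ^2)^2 + 4*κ^2*y^2))
      ((8*κ^2*x) / (2 * t)) x := hq.sqrt hqpos.ne'
  have hnum : HasDerivAt (fun y : ℝ => (1+κ^2)*y) (1+κ^2) x := by
    simpa using (hasDerivAt_id x).const_mul (1+κ^2)
  have hu : HasDerivAt (fun y => (1+κ^2)*y / Real.sqrt ((1-κ^2)^2 + 4*κ^2*y^2))
      (((1+κ^2) * t - (1+κ^2)*x * ((8*κ^2*x)/(2*t))) / t^2) x :=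
    hnum.div hsq ht.ne'
  set u : ℝ := (1+κ^2)*x / t with hudef
  have hu2 : u^2 < 1 := by
    rw [hudef, div_pow, div_lt_one (by positivity)]
    rw [ht2, hqdef]
    nlinarith [mul_pos (mul_pos hk2 hk2) hx2pos]
  have hu1 : u ≠ -1 := by nlinarith [sq_nonneg (u+1)]
  have hu1' : u ≠ 1 := by nlinarith [sq_nonneg (u-1)]
  have harc : HasDerivAt Real.arcsin (1 / Real.sqrt (1 - u^2)) u :=
    Real.hasDerivAt_arcsin hu1 hu1'
  have hcomp := (harc.comp x hu).const_mul (1/π)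
  refine hcomp.congr_deriv (Eq.symm ?_)
  have hkey : 1 - u^2 = ((1-κ^2)*s/t)^2 := by
    rw [hudef]
    field_simp
    rw [ht2, hqdef]
    nlinarith [hs2]
  have hsqrtu : Real.sqrt (1 - u^2) = (1-κ^2)*s/t := by
    rw [hkey, Real.sqrt_sq (by positivity)]
  have htq : t^2 = (1-κ^2)^2 + 4*κ^2*x^2 := ht2
  have hstep : (1+κ^2)*t - (1+κ^2)*x*(8*κ^2*x/(2*t)) = (1+κ^2)*(1-κ^2)^2/t := by
    field_simp
    linear_combination 2*htq
  rw [hsqrtu, hstep]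
  field_simp
  ring_nf
  linear_combination (1-κ^4) * ht2

lemma helper_int (g G : ℝ → ℝ) (hGc : Continuous G)
    (hd : ∀ x ∈ Ioo (-1:ℝ) 1, HasDerivAt G (g x) x)
    (hnn : ∀ x ∈ Ioo (-1:ℝ) 1, 0 ≤ g x) :
    IntervalIntegrable g volume (-1) 1 ∧ (∫ x in (-1:ℝ)..1, g x) = G 1 - G (-1) := by
  have hmin : min (-1:ℝ) 1 = -1 := by norm_num
  have hmax : max (-1:ℝ) 1 = 1 := by norm_num
  have hint : IntervalIntegrable g volume (-1) 1 := by
    apply intervalIntegral.intervalIntegrable_deriv_of_nonneg hGc.continuousOn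
    · rw [hmin, hmax]; exact hd
    · rw [hmin, hmax]; exact hnn
  refine ⟨hint, ?_⟩
  exact intervalIntegral.integral_eq_sub_of_hasDerivAt_of_tendsto (by norm_num) hd hint
    ((hGc.tendsto _).mono_left nhdsWithin_le_nhds)
    ((hGc.tendsto _).mono_left nhdsWithin_le_nhds)

lemma F_cont (κ : ℝ) (hκ0 : 0 ≤ κ) (hκ1 : κ < 1) :
    Continuous (fun y => (1/π) * Real.arcsin ((1+κ^2)*y / Real.sqrt ((1-κ^2)^2 + 4*κ^2*y^2))) := by
  have hk2 : (0:ℝ) < 1 - κ^2 := by nlinarith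
  apply continuous_const.mul
  apply Real.continuous_arcsin.comp
  apply Continuous.div (continuous_const.mul continuous_id)
  · exact Real.continuous_sqrt.comp (by continuity)
  · intro x
    have : (0:ℝ) < (1-κ^2)^2 + 4*κ^2*x^2 := by positivity
    positivity

lemma F_one (κ : ℝ) (hκ0 : 0 ≤ κ) (hκ1 : κ < 1) :
    (1/π) * Real.arcsin ((1+κ^2)*1 / Real.sqrt ((1-κ^2)^2 + 4*κ^2*1^2)) = 1/2 ∧
    (1/π) * Real.arcsin ((1+κ^2)*(-1) / Real.sqrt ((1-κ^2)^2 + 4*κ^2*(-1)^2)) = -(1/2) := by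
  have h1 : (0:ℝ) < 1 + κ^2 := by positivity
  have hq : ((1:ℝ)-κ^2)^2 + 4*κ^2*1^2 = (1+κ^2)^2 := by ring
  have hq' : ((1:ℝ)-κ^2)^2 + 4*κ^2*(-1)^2 = (1+κ^2)^2 := by ring
  rw [hq, hq', Real.sqrt_sq h1.le]
  rw [show (1+κ^2)*1/(1+κ^2) = 1 by field_simp, show (1+κ^2)*(-1)/(1+κ^2) = -1 by field_simp]
  rw [Real.arcsin_one, Real.arcsin_neg_one]
  constructor <;> field_simp <;> ring

lemma rho_nonneg (κ : ℝ) (hκ0 : 0 ≤ κ) (hκ1 : κ < 1) (x : ℝ) :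
    0 ≤ (1 - κ ^ 4) / (π * ((1 - κ ^ 2) ^ 2 + 4 * κ ^ 2 * x ^ 2) * Real.sqrt (1 - x ^ 2)) := by
  have h1 : (0:ℝ) ≤ 1 - κ^4 := by nlinarith [pow_le_one₀ hκ0 hκ1.le (n := 4)]
  have h2 : (0:ℝ) ≤ (1-κ^2)^2 + 4*κ^2*x^2 := by positivity
  have := Real.pi_pos
  have h3 : (0:ℝ) ≤ Real.sqrt (1 - x^2) := Real.sqrt_nonneg _
  positivity

lemma mass (κ : ℝ) (hκ0 : 0 ≤ κ) (hκ1 : κ < 1) :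
    IntervalIntegrable (fun x => (1 - κ ^ 4) /
        (π * ((1 - κ ^ 2) ^ 2 + 4 * κ ^ 2 * x ^ 2) * Real.sqrt (1 - x ^ 2))) volume (-1) 1 ∧
    (∫ x in (-1:ℝ)..1, (1 - κ ^ 4) /
        (π * ((1 - κ ^ 2) ^ 2 + 4 * κ ^ 2 * x ^ 2) * Real.sqrt (1 - x ^ 2))) = 1 := by
  have h := helper_int _ _ (F_cont κ hκ0 hκ1) (fun x hx => hasDerivAt_F κ hκ0 hκ1 hx)
    (fun x _ => rho_nonneg κ hκ0 hκ1 x)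
  obtain ⟨h1, h2⟩ := F_one κ hκ0 hκ1
  rw [h1, h2] at h
  convert h using 2
  norm_num

lemma moment2 (κ : ℝ) (hκ0 : 0 ≤ κ) (hκ1 : κ < 1) :
    IntervalIntegrable (fun x => x^2 * ((1 - κ ^ 4) /
        (π * ((1 - κ ^ 2) ^ 2 + 4 * κ ^ 2 * x ^ 2) * Real.sqrt (1 - x ^ 2)))) volume (-1) 1 ∧
    (∫ x in (-1:ℝ)..1, x^2 * ((1 - κ ^ 4) /
        (π * ((1 - κ ^ 2) ^ 2 + 4 * κ ^ 2 * x ^ 2) * Real.sqrt (1 - x ^ 2)))) = (1 - κ^2)/2 := by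
  have hpi := Real.pi_pos
  have hk2 : (0:ℝ) < 1 - κ^2 := by nlinarith
  have hnn : ∀ x ∈ Ioo (-1:ℝ) 1, 0 ≤ x^2 * ((1 - κ ^ 4) /
      (π * ((1 - κ ^ 2) ^ 2 + 4 * κ ^ 2 * x ^ 2) * Real.sqrt (1 - x ^ 2))) :=
    fun x _ => mul_nonneg (sq_nonneg x) (rho_nonneg κ hκ0 hκ1 x)
  rcases eq_or_lt_of_le hκ0 with hk0 | hk0
  · -- κ = 0
    subst hk0
    set H0 : ℝ → ℝ := fun y => (1/(2*π)) * (Real.arcsin y - y * Real.sqrt (1 - y^2)) with hH0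
    have hcont : Continuous H0 := by
      apply continuous_const.mul
      exact Real.continuous_arcsin.sub (continuous_id.mul (Real.continuous_sqrt.comp (by continuity)))
    have hderiv : ∀ x ∈ Ioo (-1:ℝ) 1, HasDerivAt H0 (x^2 * ((1 - (0:ℝ) ^ 4) /
        (π * ((1 - (0:ℝ) ^ 2) ^ 2 + 4 * (0:ℝ) ^ 2 * x ^ 2) * Real.sqrt (1 - x ^ 2)))) x := by
      intro x hx
      obtain ⟨hx1, hx2⟩ := hx
      have hx2pos : (0:ℝ) < 1 - x^2 := by nlinarith
      have hs : 0 < Real.sqrt (1 - x^2) := Real.sqrt_pos.mpr hx2pos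
      have hs2 : Real.sqrt (1 - x^2)^2 = 1 - x^2 := Real.sq_sqrt hx2pos.le
      have harc : HasDerivAt Real.arcsin (1 / Real.sqrt (1 - x^2)) x :=
        Real.hasDerivAt_arcsin (by nlinarith) (by nlinarith)
      have hin : HasDerivAt (fun y : ℝ => 1 - y^2) (-(2*x)) x := by
        simpa using (hasDerivAt_pow 2 x).const_sub 1
      have hsq : HasDerivAt (fun y : ℝ => Real.sqrt (1 - y^2))
          (-(2*x) / (2 * Real.sqrt (1 - x^2))) x := hin.sqrt hx2pos.ne'
      have hprod := (hasDerivAt_id x).mul hsq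
      have := (harc.sub hprod).const_mul (1/(2*π))
      refine this.congr_deriv (Eq.symm ?_)
      set s := Real.sqrt (1 - x^2)
      field_simp
      linear_combination hs2 - x * id_eq x
    have h := helper_int _ _ hcont hderiv (by simpa using hnn)
    refine ⟨h.1, ?_⟩
    rw [h.2, hH0]
    norm_num [Real.arcsin_one, Real.arcsin_neg_one, Real.sqrt_eq_zero']
    field_simp
    ring
  · -- κ > 0
    set F : ℝ → ℝ := fun y => (1/π) * Real.arcsin ((1+κ^2)*y / Real.sqrt ((1-κ^2)^2 + 4*κ^2*y^2))
      with hF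
    set H : ℝ → ℝ := fun y => (1-κ^4)/(4*π*κ^2) * Real.arcsin y - (1-κ^2)^2/(4*κ^2) * F y with hH
    have hcont : Continuous H :=
      (continuous_const.mul Real.continuous_arcsin).sub
        (continuous_const.mul (F_cont κ hκ0 hκ1))
    have hderiv : ∀ x ∈ Ioo (-1:ℝ) 1, HasDerivAt H (x^2 * ((1 - κ ^ 4) /
        (π * ((1 - κ ^ 2) ^ 2 + 4 * κ ^ 2 * x ^ 2) * Real.sqrt (1 - x ^ 2)))) x := by
      intro x hx
      obtain ⟨hx1, hx2⟩ := hx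
      have hx2pos : (0:ℝ) < 1 - x^2 := by nlinarith
      have hs : 0 < Real.sqrt (1 - x^2) := Real.sqrt_pos.mpr hx2pos
      have hqpos : (0:ℝ) < (1-κ^2)^2 + 4*κ^2*x^2 := by positivity
      have harc : HasDerivAt Real.arcsin (1 / Real.sqrt (1 - x^2)) x :=
        Real.hasDerivAt_arcsin (by nlinarith) (by nlinarith)
      have hFd := hasDerivAt_F κ hκ0 hκ1 ⟨hx1, hx2⟩
      have := (harc.const_mul ((1-κ^4)/(4*π*κ^2))).sub (hFd.const_mul ((1-κ^2)^2/(4*κ^2)))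
      refine this.congr_deriv (Eq.symm ?_)
      set s := Real.sqrt (1 - x^2)
      field_simp
      ring
    have h := helper_int _ _ hcont hderiv hnn
    refine ⟨h.1, ?_⟩
    rw [h.2, hH]
    obtain ⟨h1, h2⟩ := F_one κ hκ0 hκ1
    simp only [hF]
    rw [h1, h2, Real.arcsin_one, Real.arcsin_neg_one]
    field_simp
    ring


/-- For `κ ∈ [0,1)`, the density
`f_κ(x) = (1-κ⁴)/(π((1-κ²)² + 4κ²x²)√(1-x²))` on `(-1,1)` defines a probability
measure with mean zero and variance `(1-κ²)/2`. -/
theorem stmt_5 (κ : ℝ) (hκ : κ ∈ Ico (0 : ℝ) 1) (μ : Measure ℝ)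
    (hμ : μ = volume.withDensity (fun x : ℝ =>
      ENNReal.ofReal ((Ioo (-1 : ℝ) 1).indicator
        (fun x => (1 - κ ^ 4) /
          (π * ((1 - κ ^ 2) ^ 2 + 4 * κ ^ 2 * x ^ 2) * Real.sqrt (1 - x ^ 2))) x))) :
    IsProbabilityMeasure μ ∧ (∫ x, x ∂μ) = 0 ∧ (∫ x, x ^ 2 ∂μ) = (1 - κ ^ 2) / 2 := by
  obtain ⟨hκ0, hκ1⟩ := hκ
  set ρ : ℝ → ℝ := fun x => (1 - κ ^ 4) /
    (π * ((1 - κ ^ 2) ^ 2 + 4 * κ ^ 2 * x ^ 2) * Real.sqrt (1 - x ^ 2)) with hρ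
  set d : ℝ → ℝ := (Ioo (-1 : ℝ) 1).indicator ρ with hd
  have hρmeas : Measurable ρ := by
    apply Measurable.div measurable_const
    exact (measurable_const.mul (by measurability)).mul
      (Real.continuous_sqrt.measurable.comp (by measurability))
  have hdmeas : Measurable d := hρmeas.indicator measurableSet_Ioo
  have hdnn : ∀ x, 0 ≤ d x := fun x =>
    Set.indicator_nonneg (fun y _ => rho_nonneg κ hκ0 hκ1 y) x
  have hmass := mass κ hκ0 hκ1
  have hmom := moment2 κ hκ0 hκ1
  have hint : Integrable d := by
    rw [hd, integrable_indicator_iff measurableSet_Ioo]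
    exact hmass.1.1.mono_set Ioo_subset_Ioc_self
  -- generic conversion
  have hconv : ∀ g : ℝ → ℝ, Measurable g → (∫ x, g x ∂μ) = ∫ x, d x * g x := by
    intro g hg
    rw [hμ]
    have : (fun x : ℝ => ENNReal.ofReal (d x)) =
        fun x => ((fun x => (d x).toNNReal) x : ℝ≥0∞) := rfl
    rw [this, integral_withDensity_eq_integral_smul (hdmeas.real_toNNReal)]
    congr 1
    funext x
    rw [NNReal.smul_def, Real.coe_toNNReal _ (hdnn x), smul_eq_mul]
  have hset : ∀ g : ℝ → ℝ, (∫ x, d x * g x) = ∫ x in (-1:ℝ)..1, ρ x * g x := by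
    intro g
    have : (fun x => d x * g x) = (Ioo (-1:ℝ) 1).indicator (fun x => ρ x * g x) := by
      funext x
      by_cases hx : x ∈ Ioo (-1:ℝ) 1 <;> simp [hd, Set.indicator_of_mem,
        Set.indicator_of_notMem, hx]
    rw [this, integral_indicator measurableSet_Ioo,
      ← MeasureTheory.integral_Ioc_eq_integral_Ioo,
      ← intervalIntegral.integral_of_le (by norm_num : (-1:ℝ) ≤ 1)]
  refine ⟨?_, ?_, ?_⟩
  · constructor
    rw [hμ, withDensity_apply _ MeasurableSet.univ, Measure.restrict_univ]
    rw [← MeasureTheory.ofReal_integral_eq_lintegral_ofReal hint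
      (Filter.Eventually.of_forall hdnn)]
    have : (∫ x, d x) = 1 := by
      rw [hd, integral_indicator measurableSet_Ioo, ← MeasureTheory.integral_Ioc_eq_integral_Ioo,
        ← intervalIntegral.integral_of_le (by norm_num : (-1:ℝ) ≤ 1)]
      exact hmass.2
    rw [this]
    norm_num
  · rw [hconv (fun x => x) measurable_id, hset]
    have h1 := intervalIntegral.integral_comp_neg (a := (-1:ℝ)) (b := 1)
      (f := fun x => ρ x * x)
    simp only [neg_neg] at h1
    have h2 : (∫ x in (-1:ℝ)..1, ρ (-x) * (-x)) = ∫ x in (-1:ℝ)..1, -(ρ x * x) := by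
      apply intervalIntegral.integral_congr
      intro x _
      simp only [hρ, neg_sq]
      ring
    rw [h2, intervalIntegral.integral_neg] at h1
    skip
    linarith
  · rw [hconv (fun x => x^2) (measurable_id.pow_const 2), hset]
    have : (∫ x in (-1:ℝ)..1, ρ x * x ^ 2) = ∫ x in (-1:ℝ)..1, x^2 * ρ x := by
      apply intervalIntegral.integral_congr
      intro x _
      ring
    rw [this]
    exact hmom.2
end

section
/- With μ_κ the probability measure on (−1,1) with density (1 − κ⁴)/(π((1 − κ²)² + 4κ²x²)√(1 − x²)), the variance Var(μ_κ) = (1 − κ²)/2 tends to 0 as κ → 1⁻; consequently inf over κ ∈ [0,1) of Var(μ_κ) is 0. -/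
open Real MeasureTheory Set Filter
open scoped ENNReal NNReal


lemma hasDerivAt_Psi (κ : ℝ) (hκ : κ^2 < 1) (θ : ℝ) :
    HasDerivAt (fun t : ℝ => t + arctan (2*κ^2*Real.sin t*Real.cos t /
      ((1-κ^2)*Real.cos t^2 + (1+κ^2)*Real.sin t^2)))
    ((1-κ^4)/((1-κ^2)^2+4*κ^2*Real.sin θ^2)) θ := by
  have hv : ∀ t : ℝ, 0 < (1-κ^2)*Real.cos t^2 + (1+κ^2)*Real.sin t^2 := by
    intro t
    nlinarith [sin_sq_add_cos_sq t, sq_nonneg (Real.sin t), sq_nonneg (Real.cos t)]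
  have hu : HasDerivAt (fun t : ℝ => 2*κ^2*Real.sin t*Real.cos t)
      (2*κ^2*(Real.cos θ^2 - Real.sin θ^2)) θ := by
    have := ((Real.hasDerivAt_sin θ).const_mul (2*κ^2)).mul (Real.hasDerivAt_cos θ)
    exact this.congr_deriv (by ring)
  have hw : HasDerivAt (fun t : ℝ => (1-κ^2)*Real.cos t^2 + (1+κ^2)*Real.sin t^2)
      ((1-κ^2)*(2*Real.cos θ*(-Real.sin θ)) + (1+κ^2)*(2*Real.sin θ*Real.cos θ)) θ := by
    have h1 := (((Real.hasDerivAt_cos θ).pow 2).const_mul (1-κ^2))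
    have h2 := (((Real.hasDerivAt_sin θ).pow 2).const_mul (1+κ^2))
    exact (h1.add h2).congr_deriv (by ring)
  have hq := hu.div hw (ne_of_gt (hv θ))
  have ha := hq.arctan
  have hfin := (hasDerivAt_id θ).add ha
  refine hfin.congr_deriv (Eq.symm ?_)
  have hs := sin_sq_add_cos_sq θ
  have hd : 0 < ((1-κ^2)^2+4*κ^2*Real.sin θ^2) := by
    nlinarith [sq_nonneg (Real.sin θ), sq_nonneg κ]
  have hv' := hv θ
  set s := Real.sin θ
  set c := Real.cos θ
  set v := (1-κ^2)*c^2 + (1+κ^2)*s^2 with hvdef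
  set D := (1-κ^2)^2+4*κ^2*s^2 with hDdef
  have e1 : 1 + (2*κ^2*s*c/v)^2 = D/v^2 := by
    rw [div_pow, add_div' _ _ _ (pow_ne_zero 2 hv'.ne')]
    congr 1
    linear_combination ((1-κ^2)^2*c^2 + (1+κ^2)^2*s^2 + (1-κ^2)^2) * hs
  simp only [Pi.div_apply]
  rw [e1, one_div_div]
  rw [div_mul_div_comm, mul_comm (v^2), mul_div_mul_right _ _ (pow_ne_zero 2 hv'.ne')]
  rw [eq_comm, add_comm, div_add' _ _ _ hd.ne']
  congr 1
  linear_combination (-(2*κ^2*(1-κ^2)*c^2 - 2*κ^2*(1+κ^2)*s^2 + 2*κ^2*(1-κ^2)) + 4*κ^2*(c^2-s^2+1) - 4*κ^4*(1+s^2+c^2)) * hs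

lemma key_int (κ : ℝ) (h0 : 0 ≤ κ) (h1 : κ < 1) :
    ∫ θ in (-(π/2))..(π/2), (1-κ^4) * Real.sin θ^2 / (π*((1-κ^2)^2+4*κ^2*Real.sin θ^2))
      = (1-κ^2)/2 := by
  have hκ2 : κ^2 < 1 := by nlinarith
  have hπ := Real.pi_pos
  have hD : ∀ θ : ℝ, 0 < (1-κ^2)^2+4*κ^2*Real.sin θ^2 := by
    intro θ; nlinarith [sq_nonneg (Real.sin θ), sq_nonneg κ]
  have hcont : Continuous (fun θ : ℝ => (1-κ^4) * Real.sin θ^2 / (π*((1-κ^2)^2+4*κ^2*Real.sin θ^2))) := by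
    apply Continuous.div
    · fun_prop
    · fun_prop
    · exact fun θ => (mul_pos hπ (hD θ)).ne'
  rcases eq_or_lt_of_le h0 with h0' | h0'
  · subst h0'
    norm_num
    rw [div_div, mul_comm, ← div_div, div_self hπ.ne']
  · have hκ0 : κ ≠ 0 := ne_of_gt h0'
    have hπ0 : π ≠ 0 := hπ.ne'
    have hk1 : (1:ℝ)+κ^2 ≠ 0 := by positivity
    have hFd : ∀ θ : ℝ, HasDerivAt (fun t : ℝ =>
        (1-κ^4)/(4*κ^2*π)*t - (1-κ^4)/(4*κ^2*π)*(1-κ^2)/(1+κ^2)*(t + arctan (2*κ^2*Real.sin t*Real.cos t /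
        ((1-κ^2)*Real.cos t^2 + (1+κ^2)*Real.sin t^2))))
        ((1-κ^4) * Real.sin θ^2 / (π*((1-κ^2)^2+4*κ^2*Real.sin θ^2))) θ := by
      intro θ
      have h1' := (hasDerivAt_id θ).const_mul ((1-κ^4)/(4*κ^2*π))
      have h2' := (hasDerivAt_Psi κ hκ2 θ).const_mul ((1-κ^4)/(4*κ^2*π)*(1-κ^2)/(1+κ^2))
      have h3' := h1'.sub h2'
      refine h3'.congr_deriv (Eq.symm ?_)
      have hD0 : ((1:ℝ)-κ^2)^2+4*κ^2*Real.sin θ^2 ≠ 0 := (hD θ).ne'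
      have hD0' : ((1:ℝ)-κ^2)^2+κ^2*Real.sin θ^2*4 ≠ 0 := ne_of_gt (by linarith [hD θ])
      field_simp
      ring
    rw [intervalIntegral.integral_eq_sub_of_hasDerivAt (fun θ _ => hFd θ)
      (hcont.intervalIntegrable _ _)]
    simp only [Real.sin_pi_div_two, Real.cos_pi_div_two, Real.sin_neg, Real.cos_neg]
    norm_num
    field_simp
    ring



lemma sin_image_Ioo' : Real.sin '' Ioo (-(π/2)) (π/2) = Ioo (-1 : ℝ) 1 := by
  apply Subset.antisymm
  · exact Real.mapsTo_sin_Ioo.image_subset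
  · intro x hx
    exact ⟨arcsin x, ⟨Real.neg_pi_div_two_lt_arcsin.2 hx.1, Real.arcsin_lt_pi_div_two.2 hx.2⟩,
      Real.sin_arcsin hx.1.le hx.2.le⟩


lemma integral_mu (κ : ℝ) (h0 : 0 ≤ κ) (h1 : κ < 1) :
    ∫ x, x^2 ∂(volume.withDensity (fun x : ℝ =>
      ENNReal.ofReal ((Ioo (-1 : ℝ) 1).indicator
        (fun x => (1 - κ ^ 4) /
          (π * ((1 - κ ^ 2) ^ 2 + 4 * κ ^ 2 * x ^ 2) * Real.sqrt (1 - x ^ 2))) x)))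
      = (1-κ^2)/2 := by
  have hπ := Real.pi_pos
  have hκ2 : κ^2 < 1 := by nlinarith
  set r : ℝ → ℝ := fun x => (1 - κ ^ 4) /
      (π * ((1 - κ ^ 2) ^ 2 + 4 * κ ^ 2 * x ^ 2) * Real.sqrt (1 - x ^ 2)) with hr
  set f : ℝ → ℝ := (Ioo (-1 : ℝ) 1).indicator r with hfdef
  have hrnn : ∀ x, 0 ≤ r x := by
    intro x
    apply div_nonneg (by nlinarith)
    have : (0:ℝ) ≤ (1 - κ ^ 2) ^ 2 + 4 * κ ^ 2 * x ^ 2 := by positivity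
    positivity
  have hfnn : ∀ x, 0 ≤ f x := fun x => Set.indicator_nonneg (fun y _ => hrnn y) x
  have hrm : Measurable r := by
    apply Measurable.div measurable_const
    exact ((measurable_const.mul ((measurable_const.add
      (measurable_const.mul ((measurable_id.pow_const 2)))))).mul
      ((measurable_const.sub (measurable_id.pow_const 2)).sqrt))
  have hfm : Measurable f := hrm.indicator measurableSet_Ioo
  rw [show (fun x : ℝ => ENNReal.ofReal (f x))
      = fun x => ((((fun y => (f y).toNNReal) x) : ℝ≥0) : ℝ≥0∞) from rfl]
  rw [integral_withDensity_eq_integral_smul (hfm.real_toNNReal) (fun x => x^2)]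
  have e1 : (fun x : ℝ => ((f x).toNNReal : ℝ≥0) • x^2) = fun x => f x * x^2 := by
    funext x
    rw [NNReal.smul_def, Real.coe_toNNReal _ (hfnn x), smul_eq_mul]
  rw [e1]
  have e2 : (fun x : ℝ => f x * x^2)
      = fun x => (Ioo (-1 : ℝ) 1).indicator (fun y => r y * y^2) x := by
    funext x
    rw [hfdef, Set.indicator_mul_left]
  rw [e2, integral_indicator measurableSet_Ioo, ← sin_image_Ioo',
    integral_image_eq_integral_abs_deriv_smul measurableSet_Ioo
      (fun x _ => (Real.hasDerivAt_sin x).hasDerivWithinAt)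
      (Real.injOn_sin.mono Ioo_subset_Icc_self) (fun y => r y * y^2)]
  have e3 : ∫ θ in Ioo (-(π/2)) (π/2), |Real.cos θ| • (r (Real.sin θ) * Real.sin θ^2)
      = ∫ θ in Ioo (-(π/2)) (π/2),
        (1-κ^4) * Real.sin θ^2 / (π*((1-κ^2)^2+4*κ^2*Real.sin θ^2)) := by
    apply setIntegral_congr_fun measurableSet_Ioo
    intro θ hθ
    have hcos : 0 < Real.cos θ := Real.cos_pos_of_mem_Ioo hθ
    have hsq : 1 - Real.sin θ^2 = Real.cos θ^2 := by
      have := Real.sin_sq_add_cos_sq θ; linarith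
    have hD : 0 < (1 - κ ^ 2) ^ 2 + 4 * κ ^ 2 * Real.sin θ ^ 2 := by
      nlinarith [sq_nonneg (Real.sin θ), sq_nonneg κ]
    simp only [smul_eq_mul, abs_of_pos hcos, hr]
    rw [hsq, Real.sqrt_sq hcos.le]
    field_simp
  rw [e3, ← integral_Ioc_eq_integral_Ioo,
    ← intervalIntegral.integral_of_le (by linarith : -(π/2) ≤ π/2)]
  exact key_int κ h0 h1


/-- For the family `μ_κ` with density `(1-κ⁴)/(π((1-κ²)²+4κ²x²)√(1-x²))` on `(-1,1)`,
the variance equals `(1-κ²)/2`, tends to `0` as `κ → 1⁻`, and consequently the infimum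
of the variances over `κ ∈ [0,1)` is `0`. -/
theorem stmt_6 (μ : ℝ → Measure ℝ)
    (hμ : ∀ κ ∈ Ico (0 : ℝ) 1, μ κ = volume.withDensity (fun x : ℝ =>
      ENNReal.ofReal ((Ioo (-1 : ℝ) 1).indicator
        (fun x => (1 - κ ^ 4) /
          (π * ((1 - κ ^ 2) ^ 2 + 4 * κ ^ 2 * x ^ 2) * Real.sqrt (1 - x ^ 2))) x))) :
    (∀ κ ∈ Ico (0 : ℝ) 1, (∫ x, x ^ 2 ∂(μ κ)) = (1 - κ ^ 2) / 2) ∧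
    Tendsto (fun κ => ∫ x, x ^ 2 ∂(μ κ)) (nhdsWithin 1 (Ico (0 : ℝ) 1)) (nhds 0) ∧
    sInf ((fun κ => ∫ x, x ^ 2 ∂(μ κ)) '' Ico (0 : ℝ) 1) = 0 := by
  have part1 : ∀ κ ∈ Ico (0 : ℝ) 1, (∫ x, x ^ 2 ∂(μ κ)) = (1 - κ ^ 2) / 2 := by
    intro κ hκ
    rw [hμ κ hκ]
    exact integral_mu κ hκ.1 hκ.2
  refine ⟨part1, ?_, ?_⟩
  · have h2 : Tendsto (fun κ : ℝ => (1 - κ ^ 2) / 2) (nhdsWithin 1 (Ico (0 : ℝ) 1)) (nhds 0) := by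
      have hc : Tendsto (fun κ : ℝ => (1 - κ ^ 2) / 2) (nhds 1) (nhds ((1 - 1 ^ 2) / 2)) :=
        ((continuous_const.sub (continuous_pow 2)).div_const 2).tendsto 1
      norm_num at hc
      exact hc.mono_left nhdsWithin_le_nhds
    apply h2.congr'
    filter_upwards [self_mem_nhdsWithin] with κ hκ
    exact (part1 κ hκ).symm
  · have hmem : ∀ κ ∈ Ico (0 : ℝ) 1,
        (∫ x, x ^ 2 ∂(μ κ)) ∈ ((fun κ => ∫ x, x ^ 2 ∂(μ κ)) '' Ico (0 : ℝ) 1) :=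
      fun κ hκ => ⟨κ, hκ, rfl⟩
    have hbdd : BddBelow ((fun κ => ∫ x, x ^ 2 ∂(μ κ)) '' Ico (0 : ℝ) 1) := by
      refine ⟨0, ?_⟩
      rintro y ⟨κ, hκ, rfl⟩
      simp only [part1 κ hκ]
      have := hκ.2
      nlinarith [hκ.1]
    apply le_antisymm
    · apply le_of_forall_pos_le_add
      intro ε hε
      set κ : ℝ := Real.sqrt (max 0 (1 - ε)) with hκdef
      have hκ0 : 0 ≤ κ := Real.sqrt_nonneg _
      have hκsq : κ ^ 2 = max 0 (1 - ε) := Real.sq_sqrt (le_max_left _ _)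
      have hκ1 : κ < 1 := by
        rw [show (1:ℝ) = Real.sqrt 1 by rw [Real.sqrt_one]]
        apply Real.sqrt_lt_sqrt (le_max_left _ _)
        rw [max_lt_iff]
        constructor <;> linarith
      have hval := part1 κ ⟨hκ0, hκ1⟩
      calc sInf ((fun κ => ∫ x, x ^ 2 ∂(μ κ)) '' Ico (0 : ℝ) 1)
          ≤ ∫ x, x ^ 2 ∂(μ κ) := csInf_le hbdd (hmem κ ⟨hκ0, hκ1⟩)
        _ = (1 - κ ^ 2) / 2 := hval
        _ ≤ 0 + ε := by
            rw [hκsq]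
            rcases le_total (1 - ε) 0 with h | h
            · rw [max_eq_left h]; linarith
            · rw [max_eq_right h]; linarith
    · apply Real.sInf_nonneg
      rintro y ⟨κ, hκ, rfl⟩
      simp only [part1 κ hκ]
      have := hκ.2
      nlinarith [hκ.1]
end
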